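/- Multivariate Gaussian factorization identity underlying Lemma 2: let Ψ be an n×n real positive definite matrix, d, μ, y ∈ ℝⁿ, and t ∈ ℝ. Set Σ = Ψ + d·dᵀ, η = dᵀΨ⁻¹(y−μ)/(1 + dᵀΨ⁻¹d) and ζ² = 1/(1 + dᵀΨ⁻¹d). Then φₙ(y; μ + t·d, Ψ)·φ(t; 0, 1) = φₙ(y; μ, Σ)·φ(t; η, ζ²), where φₙ(y; m, V) = (2π)^{-n/2}·(det V)^{-1/2}·exp(-½·(y−m)ᵀV⁻¹(y−m)). -/

import Mathlib

open Real Matrix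

/-- The normal density with mean `m` and variance `s2 > 0`:
`φ(x; m, s²) = (2πs²)^{-1/2} exp(-(x−m)²/(2s²))`. -/
noncomputable def normalPDF (m s2 x : ℝ) : ℝ :=
  (2 * π * s2) ^ (-(1 : ℝ) / 2) * Real.exp (-(x - m) ^ 2 / (2 * s2))

/-- The `n`-dimensional normal density with mean `m` and positive definite covariance `V`:
`φₙ(y; m, V) = (2π)^{-n/2} (det V)^{-1/2} exp(-½ (y−m)ᵀ V⁻¹ (y−m))`. -/
noncomputable def mvNormalPDF {n : ℕ} (m : Fin n → ℝ) (V : Matrix (Fin n) (Fin n) ℝ)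
    (y : Fin n → ℝ) : ℝ :=
  (2 * π) ^ (-(n : ℝ) / 2) * V.det ^ (-(1 : ℝ) / 2) *
    Real.exp (-(1 / 2) * ((y - m) ⬝ᵥ (V⁻¹ *ᵥ (y - m))))

section Helpers

variable {n : ℕ}

lemma my_mul_vecMulVec (A : Matrix (Fin n) (Fin n) ℝ) (u v : Fin n → ℝ) :
    A * vecMulVec u v = vecMulVec (A *ᵥ u) v := by
  ext i j
  simp [Matrix.mul_apply, vecMulVec_apply, Matrix.mulVec, dotProduct,
    Finset.sum_mul, mul_assoc]

lemma my_vecMulVec_mul (u v : Fin n → ℝ) (A : Matrix (Fin n) (Fin n) ℝ) :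
    vecMulVec u v * A = vecMulVec u (v ᵥ* A) := by
  ext i j
  simp only [Matrix.mul_apply, vecMulVec_apply, Matrix.vecMul, dotProduct,
    Finset.mul_sum]
  exact Finset.sum_congr rfl fun k _ => by ring

lemma my_vecMulVec_mulVec (u v x : Fin n → ℝ) :
    vecMulVec u v *ᵥ x = (v ⬝ᵥ x) • u := by
  ext i
  simp only [Matrix.mulVec, vecMulVec_apply, dotProduct, Pi.smul_apply,
    smul_eq_mul, Finset.sum_mul]
  exact Finset.sum_congr rfl fun k _ => by ring

lemma my_smul_vecMulVec (s : ℝ) (u v : Fin n → ℝ) :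
    vecMulVec (s • u) v = s • vecMulVec u v := by
  ext i j
  simp [vecMulVec_apply, mul_assoc]

end Helpers

/-- Multivariate Gaussian factorization identity underlying Lemma 2: for `Ψ` positive
definite, with `Σ = Ψ + d·dᵀ`, `η = dᵀΨ⁻¹(y−μ)/(1 + dᵀΨ⁻¹d)` and `ζ² = 1/(1 + dᵀΨ⁻¹d)`,
`φₙ(y; μ + t·d, Ψ)·φ(t; 0, 1) = φₙ(y; μ, Σ)·φ(t; η, ζ²)`. -/
theorem mv_gaussian_factorization {n : ℕ}
    (Ψ : Matrix (Fin n) (Fin n) ℝ) (hΨ : Ψ.PosDef)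
    (d μ y : Fin n → ℝ) (t : ℝ)
    (η ζ2 : ℝ)
    (hη : η = d ⬝ᵥ (Ψ⁻¹ *ᵥ (y - μ)) / (1 + d ⬝ᵥ (Ψ⁻¹ *ᵥ d)))
    (hζ : ζ2 = 1 / (1 + d ⬝ᵥ (Ψ⁻¹ *ᵥ d))) :
    mvNormalPDF (μ + t • d) Ψ y * normalPDF 0 1 t =
      mvNormalPDF μ (Ψ + vecMulVec d d) y * normalPDF η ζ2 t := by
  classical
  set A := Ψ⁻¹ with hAdef
  have hdetU : IsUnit Ψ.det := isUnit_iff_ne_zero.2 hΨ.det_pos.ne'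
  have hAH : A.IsHermitian := hΨ.inv.isHermitian
  have hAT : Aᵀ = A := hAH
  have hvm : ∀ v : Fin n → ℝ, v ᵥ* A = A *ᵥ v := by
    intro v
    nth_rewrite 1 [← hAT]
    rw [Matrix.vecMul_transpose]
  have hsymm : ∀ u v : Fin n → ℝ, u ⬝ᵥ (A *ᵥ v) = v ⬝ᵥ (A *ᵥ u) := by
    intro u v
    rw [Matrix.dotProduct_mulVec, hvm, dotProduct_comm]
  set x := y - μ with hxdef
  set c := d ⬝ᵥ (A *ᵥ d) with hcdef
  set a := d ⬝ᵥ (A *ᵥ x) with hadef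
  set w := A *ᵥ d with hwdef
  have hc : 0 ≤ c := by simpa using hΨ.inv.posSemidef.dotProduct_mulVec_nonneg d
  have h1c : (0:ℝ) < 1 + c := by linarith
  have h1c' : (1:ℝ) + c ≠ 0 := h1c.ne'
  set k := (1 + c)⁻¹ with hkdef
  -- determinant
  have hdvA : d ᵥ* A = w := hvm d
  -- inverse
  have hΨA : Ψ * A = 1 := Ψ.mul_nonsing_inv hdetU
  have hdet : (Ψ + vecMulVec d d).det = Ψ.det * (1 + c) := by
    have hfac : Ψ + vecMulVec d d = Ψ * (1 + A * vecMulVec d d) := by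
      rw [Matrix.mul_add, Matrix.mul_one, ← Matrix.mul_assoc, hΨA, Matrix.one_mul]
    rw [hfac, Matrix.det_mul, my_mul_vecMulVec, ← hwdef, vecMulVec_eq (Fin 1),
      Matrix.det_one_add_replicateCol_mul_replicateRow, ← hcdef]
  have hΨw : Ψ *ᵥ w = d := by
    rw [hwdef, Matrix.mulVec_mulVec, hΨA, Matrix.one_mulVec]
  have hMinv : (Ψ + vecMulVec d d)⁻¹ = A - k • vecMulVec w w := by
    apply Matrix.inv_eq_right_inv
    rw [Matrix.add_mul, Matrix.mul_sub, Matrix.mul_sub, Matrix.mul_smul, Matrix.mul_smul,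
      hΨA, my_mul_vecMulVec, hΨw, my_vecMulVec_mul, hdvA, my_mul_vecMulVec,
      my_vecMulVec_mulVec, my_smul_vecMulVec]
    have hdw : d ⬝ᵥ w = c := rfl
    rw [hdw, smul_smul]
    have hX : vecMulVec d w = k • vecMulVec d w + (k * c) • vecMulVec d w := by
      rw [← add_smul]
      have : k + k * c = 1 := by rw [hkdef]; field_simp
      rw [this, one_smul]
    nth_rewrite 2 [hX]
    abel
  -- quadratic forms
  have hwx : w ⬝ᵥ x = a := by rw [dotProduct_comm, hsymm x d, hadef]
  have hq2 : x ⬝ᵥ ((Ψ + vecMulVec d d)⁻¹ *ᵥ x) = x ⬝ᵥ (A *ᵥ x) - k * (a * a) := by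
    rw [hMinv, Matrix.sub_mulVec, Matrix.smul_mulVec, my_vecMulVec_mulVec,
      dotProduct_sub, hwx]
    have hxw : x ⬝ᵥ w = a := (dotProduct_comm x w).trans hwx
    congr 1
    simp only [dotProduct_smul, hwx, hxw, smul_eq_mul]
  have hsub : y - (μ + t • d) = x - t • d := by rw [hxdef, sub_add_eq_sub_sub]
  have hq1 : (x - t • d) ⬝ᵥ (A *ᵥ (x - t • d)) =
      x ⬝ᵥ (A *ᵥ x) - 2 * t * a + t ^ 2 * c := by
    rw [Matrix.mulVec_sub, Matrix.mulVec_smul, sub_dotProduct,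
      dotProduct_sub, dotProduct_sub, smul_dotProduct,
      smul_dotProduct, dotProduct_smul, dotProduct_smul,
      hsymm x d]
    simp only [smul_eq_mul, ← hadef, ← hcdef]
    ring
  -- assemble
  have hdetpos := hΨ.det_pos
  unfold mvNormalPDF normalPDF
  rw [hsub, hq1, hdet, hq2, hη, hζ]
  have hcoef : Ψ.det ^ (-(1:ℝ)/2) * (2 * π * 1) ^ (-(1:ℝ)/2) =
      (Ψ.det * (1 + c)) ^ (-(1:ℝ)/2) * (2 * π * (1 / (1 + c))) ^ (-(1:ℝ)/2) := by
    have h2π : (0:ℝ) ≤ 2 * π := by positivity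
    have h1 : ((1:ℝ)/(1+c)) ^ (-(1:ℝ)/2) = ((1+c) ^ (-(1:ℝ)/2))⁻¹ := by
      rw [one_div, Real.inv_rpow h1c.le]
    have hpos : (0:ℝ) < (1+c) ^ (-(1:ℝ)/2) := Real.rpow_pos_of_pos h1c _
    rw [mul_one, Real.mul_rpow hdetpos.le h1c.le, Real.mul_rpow h2π (by positivity), h1]
    field_simp
  have hexp : Real.exp (-(1/2) * (x ⬝ᵥ (A *ᵥ x) - 2 * t * a + t ^ 2 * c)) *
        Real.exp (-(t - 0) ^ 2 / (2 * 1)) =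
      Real.exp (-(1/2) * (x ⬝ᵥ (A *ᵥ x) - k * (a * a))) *
        Real.exp (-(t - a / (1 + c)) ^ 2 / (2 * (1 / (1 + c)))) := by
    rw [← Real.exp_add, ← Real.exp_add]
    congr 1
    rw [hkdef]
    field_simp
    ring
  set C := (2 * π) ^ (-(n:ℝ)/2)
  set D1 := Ψ.det ^ (-(1:ℝ)/2)
  set D2 := (Ψ.det * (1 + c)) ^ (-(1:ℝ)/2)
  set P1 := (2 * π * 1) ^ (-(1:ℝ)/2)
  set P2 := (2 * π * (1 / (1 + c))) ^ (-(1:ℝ)/2)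
  set E1 := Real.exp (-(1/2) * (x ⬝ᵥ (A *ᵥ x) - 2 * t * a + t ^ 2 * c))
  set E2 := Real.exp (-(1/2) * (x ⬝ᵥ (A *ᵥ x) - k * (a * a)))
  set F1 := Real.exp (-(t - 0) ^ 2 / (2 * 1))
  set F2 := Real.exp (-(t - a / (1 + c)) ^ 2 / (2 * (1 / (1 + c))))
  linear_combination C * E2 * F2 * hcoef + C * D1 * P1 * hexp
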